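/- arXiv:1601.01916 — 5 statements merged into one kernel-verified Lean document; each statement's English description precedes it below -/
import Mathlib

section
/- For every ω ∈ ℝ, every nonzero x ∈ ℝ², and every ξ ∈ ℝ², the weighted circular mean satisfies (1/(2π)) ∫₀^{2π} ⟨θ(s), ξ⟩ · exp(i·ω·⟨θ(s), x⟩) ds = i · ⟨x/‖x‖, ξ⟩ · J₁(ω‖x‖). -/
open MeasureTheory Real Filter
open scoped RealInnerProductSpace

/-- Bessel function of the first kind of order 0 (Bessel's integral). -/
noncomputable def J0 (u : ℝ) : ℝ := (1 / π) * ∫ τ in (0:ℝ)..π, Real.cos (u * Real.sin τ)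

/-- Bessel function of the first kind of order 1 (Bessel's integral). -/
noncomputable def J1 (u : ℝ) : ℝ := (1 / π) * ∫ τ in (0:ℝ)..π, Real.cos (τ - u * Real.sin τ)

/-- The unit direction `θ(s) = (cos s, sin s)` in `ℝ²`. -/
noncomputable def unitDir (s : ℝ) : EuclideanSpace ℝ (Fin 2) := WithLp.toLp 2 ![Real.cos s, Real.sin s]

namespace WCMaux

open intervalIntegral

lemma int_sin_exp (u : ℝ) : ∫ t in (0:ℝ)..(2*π), (Real.sin t : ℂ) * Complex.exp (Complex.I * u * Real.cos t) = 0 := by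
  set g : ℝ → ℂ := fun t => (Real.sin t : ℂ) * Complex.exp (Complex.I * u * Real.cos t) with hg
  have h1 : (∫ t in (0:ℝ)..(2*π), g (2*π - t)) = ∫ t in (2*π - 2*π)..(2*π - 0), g t :=
    integral_comp_sub_left g (2*π)
  have h2 : ∀ t : ℝ, g (2*π - t) = - g t := by
    intro t
    have hs : Real.sin (2*π - t) = -Real.sin t := by simp [Real.sin_sub]
    have hc : Real.cos (2*π - t) = Real.cos t := by simp [Real.cos_sub]
    simp only [hg, hs, hc]
    push_cast
    ring
  simp only [h2, intervalIntegral.integral_neg, sub_self, sub_zero] at h1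
  linear_combination -h1/2

lemma cos_cos_zero (u : ℝ) : ∫ τ in (0:ℝ)..π, Real.cos τ * Real.cos (u * Real.sin τ) = 0 := by
  set g : ℝ → ℝ := fun t => Real.cos t * Real.cos (u * Real.sin t) with hg
  have h1 : (∫ t in (0:ℝ)..π, g (π - t)) = ∫ t in (π - π)..(π - 0), g t :=
    integral_comp_sub_left g π
  have h2 : ∀ t : ℝ, g (π - t) = - g t := by
    intro t
    simp only [hg, Real.cos_pi_sub, Real.sin_pi_sub]
    ring
  simp only [h2, intervalIntegral.integral_neg, sub_self, sub_zero] at h1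
  linarith

lemma double_half (F : ℝ → ℝ) (hF : Continuous F) (hs : ∀ t, F (π - t) = F t) :
    (∫ t in (0:ℝ)..π, F t) = 2 * ∫ t in (0:ℝ)..(π/2), F t := by
  have h1 : (∫ t in (0:ℝ)..(π/2), F (π - t)) = ∫ t in (π - π/2)..(π - 0), F t :=
    integral_comp_sub_left F π
  simp only [hs, sub_zero] at h1
  have h2 : (π - π/2 : ℝ) = π/2 := by ring
  rw [h2] at h1
  have h3 := integral_add_adjacent_intervals (a := (0:ℝ)) (b := π/2) (c := π) (μ := volume)
    (hF.intervalIntegrable _ _) (hF.intervalIntegrable _ _)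
  rw [← h3, ← h1]; ring

lemma J1_eq (u : ℝ) : π * J1 u = ∫ τ in (0:ℝ)..π, Real.sin τ * Real.sin (u * Real.sin τ) := by
  have hsplit : ∀ τ : ℝ, Real.cos (τ - u * Real.sin τ) =
      Real.cos τ * Real.cos (u * Real.sin τ) + Real.sin τ * Real.sin (u * Real.sin τ) := by
    intro τ; rw [Real.cos_sub]
  have hc1 : Continuous fun τ : ℝ => Real.cos τ * Real.cos (u * Real.sin τ) := by fun_prop
  have hc2 : Continuous fun τ : ℝ => Real.sin τ * Real.sin (u * Real.sin τ) := by fun_prop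
  have : (∫ τ in (0:ℝ)..π, Real.cos (τ - u * Real.sin τ)) =
      (∫ τ in (0:ℝ)..π, Real.cos τ * Real.cos (u * Real.sin τ)) +
      ∫ τ in (0:ℝ)..π, Real.sin τ * Real.sin (u * Real.sin τ) := by
    rw [← intervalIntegral.integral_add (hc1.intervalIntegrable _ _) (hc2.intervalIntegrable _ _)]
    simp only [hsplit]
  rw [J1, ← mul_assoc, mul_one_div, div_self Real.pi_ne_zero, one_mul, this, cos_cos_zero, zero_add]

lemma halfint (u : ℝ) : (∫ t in (0:ℝ)..π, Real.cos t * Real.sin (u * Real.cos t)) =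
    ∫ t in (0:ℝ)..π, Real.sin t * Real.sin (u * Real.sin t) := by
  set F : ℝ → ℝ := fun t => Real.sin t * Real.sin (u * Real.sin t) with hF
  have hFc : Continuous F := by fun_prop
  have hsym : ∀ t, F (π - t) = F t := by intro t; simp [hF, Real.sin_pi_sub]
  have key : ∀ t : ℝ, Real.cos t * Real.sin (u * Real.cos t) = F (π/2 - t) := by
    intro t; simp [hF, Real.sin_pi_div_two_sub]
  have h1 : (∫ t in (0:ℝ)..π, F (π/2 - t)) = ∫ t in (π/2 - π)..(π/2 - 0), F t :=
    integral_comp_sub_left F (π/2)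
  have h2 : (π/2 - π : ℝ) = -(π/2) := by ring
  rw [h2, sub_zero] at h1
  have heven : ∀ t, F (-t) = F t := by intro t; simp [hF]
  have h3 : (∫ t in (0:ℝ)..(π/2), F (-t)) = ∫ t in (-(π/2))..(-(0:ℝ)), F t :=
    integral_comp_neg F
  simp only [heven, neg_zero] at h3
  have h4 := integral_add_adjacent_intervals (a := (-(π/2):ℝ)) (b := 0) (c := π/2) (μ := volume)
    (hFc.intervalIntegrable _ _) (hFc.intervalIntegrable _ _)
  simp only [key]
  rw [h1, ← h4, ← h3, double_half F hFc hsym]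
  ring

lemma exp_sub_exp (z : ℂ) : Complex.exp (Complex.I * z) - Complex.exp (-(Complex.I * z)) =
    2 * Complex.I * Complex.sin z := by
  rw [Complex.sin]
  ring_nf
  rw [Complex.I_sq]
  ring

lemma int_cos_exp (u : ℝ) : (∫ t in (0:ℝ)..(2*π), (Real.cos t : ℂ) * Complex.exp (Complex.I * u * Real.cos t)) = 2 * π * Complex.I * J1 u := by
  set g : ℝ → ℂ := fun t => (Real.cos t : ℂ) * Complex.exp (Complex.I * u * Real.cos t) with hg
  have hgc : Continuous g := by fun_prop
  have hsplit := integral_add_adjacent_intervals (a := (0:ℝ)) (b := π) (c := 2*π) (μ := volume)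
    (hgc.intervalIntegrable _ _) (hgc.intervalIntegrable _ _)
  have hshift : (∫ t in (0:ℝ)..π, g (t + π)) = ∫ t in (0+π:ℝ)..(π+π), g t :=
    integral_comp_add_right g π
  have hpp : (0+π:ℝ) = π := by ring
  have hpp2 : (π+π:ℝ) = 2*π := by ring
  rw [hpp, hpp2] at hshift
  have hcomb : (∫ t in (0:ℝ)..(2*π), g t) =
      ∫ t in (0:ℝ)..π, ((Real.cos t : ℂ) * (2 * Complex.I * Complex.sin (u * Real.cos t))) := by
    rw [← hsplit, ← hshift,
      ← intervalIntegral.integral_add (f := g) (g := fun t => g (t + π))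
        (hgc.intervalIntegrable _ _)
        ((hgc.comp (continuous_id.add continuous_const)).intervalIntegrable _ _)]
    apply intervalIntegral.integral_congr
    intro t _
    have h1 : Real.cos (t + π) = -Real.cos t := Real.cos_add_pi t
    simp only [hg, h1]
    push_cast
    rw [show Complex.I * (u:ℂ) * -Complex.cos ↑t = -(Complex.I * ((u:ℂ) * Complex.cos ↑t)) by ring,
      show Complex.I * (u:ℂ) * Complex.cos ↑t = Complex.I * ((u:ℂ) * Complex.cos ↑t) by ring,
      ← exp_sub_exp]
    ring
  rw [hcomb]
  have : ∀ t : ℝ, (Real.cos t : ℂ) * (2 * Complex.I * Complex.sin (u * Real.cos t)) =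
      (2 * Complex.I) * ((Real.cos t * Real.sin (u * Real.cos t) : ℝ) : ℂ) := by
    intro t
    push_cast [Complex.ofReal_sin]
    ring
  simp only [this]
  rw [intervalIntegral.integral_const_mul, intervalIntegral.integral_ofReal, halfint, ← J1_eq]
  push_cast
  ring

end WCMaux

/-- The weighted circular mean equals `i ⟨x/‖x‖, ξ⟩ J₁(ω‖x‖)`. -/
theorem weighted_circular_mean_eq_J1 (ω : ℝ) (x ξ : EuclideanSpace ℝ (Fin 2)) (hx : x ≠ 0) :
    (1 / (2 * (π : ℂ))) *
        ∫ s in (0:ℝ)..(2 * π),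
          ((⟪unitDir s, ξ⟫ : ℝ) : ℂ) *
            Complex.exp (Complex.I * (ω : ℂ) * ((⟪unitDir s, x⟫ : ℝ) : ℂ)) =
      Complex.I * ((⟪‖x‖⁻¹ • x, ξ⟫ : ℝ) : ℂ) * ((J1 (ω * ‖x‖) : ℝ) : ℂ) := by
  classical
  set r : ℝ := ‖x‖ with hr
  have hrpos : 0 < r := norm_pos_iff.mpr hx
  have hrne : r ≠ 0 := ne_of_gt hrpos
  -- polar coordinates for x
  set z : ℂ := Complex.mk (x 0) (x 1) with hz
  have hzre : z.re = x 0 := rfl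
  have hzim : z.im = x 1 := rfl
  have hzne : z ≠ 0 := by
    intro h
    apply hx
    ext i
    fin_cases i
    · simpa using congrArg Complex.re h
    · simpa using congrArg Complex.im h
  have habs : ‖z‖ = r := by
    rw [Complex.norm_def, Complex.normSq_mk, hr, EuclideanSpace.norm_eq]
    simp [Fin.sum_univ_two, Real.norm_eq_abs, sq_abs, sq]
  set φ : ℝ := Complex.arg z with hφ
  have hx0 : x 0 = r * Real.cos φ := by
    rw [hφ, Complex.cos_arg hzne, habs, hzre]
    field_simp
  have hx1 : x 1 = r * Real.sin φ := by
    rw [hφ, Complex.sin_arg, habs, hzim]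
    field_simp
  set u : ℝ := ω * r with hu
  -- coordinate forms of the inner products
  have hinξ : ∀ s : ℝ, (⟪unitDir s, ξ⟫ : ℝ) = Real.cos s * ξ 0 + Real.sin s * ξ 1 := by
    intro s
    simp [unitDir, PiLp.inner_apply, Fin.sum_univ_two, RCLike.inner_apply]
    ring
  have hinx : ∀ s : ℝ, (⟪unitDir s, x⟫ : ℝ) = r * Real.cos (s - φ) := by
    intro s
    have : (⟪unitDir s, x⟫ : ℝ) = Real.cos s * x 0 + Real.sin s * x 1 := by
      simp [unitDir, PiLp.inner_apply, Fin.sum_univ_two, RCLike.inner_apply]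
      ring
    rw [this, hx0, hx1, Real.cos_sub]
    ring
  set f : ℝ → ℂ := fun s =>
    ((Real.cos s * ξ 0 + Real.sin s * ξ 1 : ℝ) : ℂ) *
      Complex.exp (Complex.I * (ω : ℂ) * ((r * Real.cos (s - φ) : ℝ) : ℂ)) with hf
  have hmain : (∫ s in (0:ℝ)..(2*π),
      ((⟪unitDir s, ξ⟫ : ℝ) : ℂ) *
        Complex.exp (Complex.I * (ω : ℂ) * ((⟪unitDir s, x⟫ : ℝ) : ℂ))) =
      ∫ s in (0:ℝ)..(2*π), f s := by
    apply intervalIntegral.integral_congr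
    intro s _
    simp only [hinξ, hinx, hf]
  rw [hmain]
  -- periodicity and shift
  have hper : Function.Periodic f (2*π) := by
    intro s
    have h1 : Real.cos (s + 2*π) = Real.cos s := Real.cos_add_two_pi s
    have h2 : Real.sin (s + 2*π) = Real.sin s := Real.sin_add_two_pi s
    have h3 : Real.cos (s + 2*π - φ) = Real.cos (s - φ) := by
      rw [show s + 2*π - φ = (s - φ) + 2*π by ring, Real.cos_add_two_pi]
    simp only [hf, h1, h2, h3]
  have hshift : (∫ s in (0:ℝ)..(2*π), f s) = ∫ t in (0:ℝ)..(2*π), f (t + φ) := by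
    have h1 : (∫ s in (0:ℝ)..(0 + 2*π), f s) = ∫ s in φ..(φ + 2*π), f s :=
      hper.intervalIntegral_add_eq 0 φ
    have h2 : (∫ t in (0:ℝ)..(2*π), f (t + φ)) = ∫ t in (0 + φ:ℝ)..(2*π + φ), f t :=
      intervalIntegral.integral_comp_add_right f φ
    rw [zero_add] at h1 h2
    rw [h1, h2, show 2*π + φ = φ + 2*π by ring]
  rw [hshift]
  -- simplify shifted integrand
  set A : ℝ := ξ 0 * Real.cos φ + ξ 1 * Real.sin φ with hA
  set B : ℝ := ξ 1 * Real.cos φ - ξ 0 * Real.sin φ with hB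
  have hpt : ∀ t : ℝ, f (t + φ) =
      (A : ℂ) * ((Real.cos t : ℂ) * Complex.exp (Complex.I * u * Real.cos t)) +
      (B : ℂ) * ((Real.sin t : ℂ) * Complex.exp (Complex.I * u * Real.cos t)) := by
    intro t
    have h1 : Real.cos (t + φ) = Real.cos t * Real.cos φ - Real.sin t * Real.sin φ :=
      Real.cos_add t φ
    have h2 : Real.sin (t + φ) = Real.sin t * Real.cos φ + Real.cos t * Real.sin φ :=
      Real.sin_add t φ
    have h3 : (t + φ - φ : ℝ) = t := by ring
    simp only [hf, h1, h2, h3, hA, hB, hu]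
    push_cast
    ring_nf
  have hg1 : Continuous fun t : ℝ => (Real.cos t : ℂ) * Complex.exp (Complex.I * u * Real.cos t) := by
    fun_prop
  have hg2 : Continuous fun t : ℝ => (Real.sin t : ℂ) * Complex.exp (Complex.I * u * Real.cos t) := by
    fun_prop
  have hInt : (∫ t in (0:ℝ)..(2*π), f (t + φ)) =
      (A : ℂ) * (∫ t in (0:ℝ)..(2*π), (Real.cos t : ℂ) * Complex.exp (Complex.I * u * Real.cos t)) +
      (B : ℂ) * (∫ t in (0:ℝ)..(2*π), (Real.sin t : ℂ) * Complex.exp (Complex.I * u * Real.cos t)) := by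
    rw [← intervalIntegral.integral_const_mul, ← intervalIntegral.integral_const_mul,
      ← intervalIntegral.integral_add (f := fun t : ℝ => (A : ℂ) * ((Real.cos t : ℂ) * Complex.exp (Complex.I * u * Real.cos t)))
          (g := fun t : ℝ => (B : ℂ) * ((Real.sin t : ℂ) * Complex.exp (Complex.I * u * Real.cos t)))
        ((continuous_const.mul hg1).intervalIntegrable _ _)
        ((continuous_const.mul hg2).intervalIntegrable _ _)]
    exact intervalIntegral.integral_congr fun t _ => hpt t
  rw [hInt, WCMaux.int_cos_exp, WCMaux.int_sin_exp, mul_zero, add_zero]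
  -- final algebra
  have hAinner : (⟪‖x‖⁻¹ • x, ξ⟫ : ℝ) = A := by
    have : (⟪‖x‖⁻¹ • x, ξ⟫ : ℝ) = r⁻¹ * (x 0 * ξ 0 + x 1 * ξ 1) := by
      simp [PiLp.inner_apply, Fin.sum_univ_two, RCLike.inner_apply, ← hr]
      ring
    rw [this, hx0, hx1, hA]
    field_simp
  rw [hAinner]
  have hπ : (π : ℂ) ≠ 0 := by
    exact_mod_cast Real.pi_ne_zero
  field_simp
end

section
/- Let ω ∈ ℝ, let x ∈ ℝ² be nonzero, and let ξ ∈ ℝ². For each positive integer N set θ_n = θ(2πn/N) for n = 1,…,N. Then (1/N) ∑_{n=1}^{N} ⟨θ_n, ξ⟩ · exp(i·ω·⟨θ_n, x⟩) tends to i · ⟨x/‖x‖, ξ⟩ · J₁(ω‖x‖) as N → ∞. -/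
open MeasureTheory Real Filter Topology intervalIntegral
open scoped RealInnerProductSpace

lemma riemann_sum_tendsto (f : ℝ → ℂ) (hf : Continuous f) :
    Tendsto (fun N : ℕ => ((N : ℝ))⁻¹ • ∑ n ∈ Finset.Icc 1 N, f (n / N)) atTop
      (𝓝 (∫ t in (0:ℝ)..1, f t)) := by
  rw [Metric.tendsto_atTop]
  intro ε hε
  -- uniform continuity on [0,1]
  have hu : UniformContinuousOn f (Set.Icc (0:ℝ) 1) :=
    (isCompact_Icc).uniformContinuousOn_of_continuous hf.continuousOn
  rw [Metric.uniformContinuousOn_iff] at hu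
  obtain ⟨δ, hδ, hδ'⟩ := hu (ε/2) (by positivity)
  obtain ⟨N₀, hN₀⟩ := exists_nat_gt (1/δ)
  refine ⟨N₀ + 1, fun N hN => ?_⟩
  have hN1 : 1 ≤ N := le_trans (Nat.le_add_left 1 N₀) hN
  have hNpos : (0:ℝ) < N := by exact_mod_cast Nat.lt_of_lt_of_le Nat.zero_lt_one hN1
  have hNδ : 1 / (N:ℝ) < δ := by
    rw [div_lt_iff₀ hNpos]
    have : 1/δ < (N:ℝ) := lt_of_lt_of_le hN₀ (by exact_mod_cast le_trans (Nat.le_succ N₀) hN)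
    calc (1:ℝ) = δ * (1/δ) := by field_simp
    _ < δ * N := by exact mul_lt_mul_of_pos_left this hδ
  set a : ℕ → ℝ := fun k => k / N with ha
  have hint : ∀ k < N, IntervalIntegrable f volume (a k) (a (k+1)) :=
    fun k _ => hf.intervalIntegrable _ _
  have hsplit : (∫ t in (0:ℝ)..1, f t) = ∑ k ∈ Finset.range N, ∫ t in a k..a (k+1), f t := by
    rw [intervalIntegral.sum_integral_adjacent_intervals hint]
    simp [ha, div_self (ne_of_gt hNpos)]
  have hsum : ∑ n ∈ Finset.Icc 1 N, f (n / N) = ∑ k ∈ Finset.range N, f ((k+1) / N) := by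
    rw [← Finset.Ico_add_one_right_eq_Icc, Finset.sum_Ico_eq_sum_range]
    simp [add_comm]
  rw [hsplit, hsum, Finset.smul_sum, dist_eq_norm, ← Finset.sum_sub_distrib]
  have key : ∀ k ∈ Finset.range N,
      ‖((N:ℝ))⁻¹ • f ((k+1)/N) - ∫ t in a k..a (k+1), f t‖ ≤ (ε/2) / N := by
    intro k hk
    have hconst : ((N:ℝ))⁻¹ • f ((k+1)/N) = ∫ _ in a k..a (k+1), f ((k+1)/N) := by
      rw [intervalIntegral.integral_const]
      congr 1
      simp only [ha]
      field_simp
      push_cast; ring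
    rw [hconst, ← intervalIntegral.integral_sub (by apply _root_.intervalIntegrable_const)
      (hf.intervalIntegrable _ _)]
    have hk' : k < N := Finset.mem_range.mp hk
    have hle : a k ≤ a (k+1) := by
      simp only [ha]
      rw [div_le_div_iff₀ hNpos hNpos]
      push_cast
      nlinarith
    have hbound : ∀ t ∈ Set.uIoc (a k) (a (k+1)), ‖f ((k+1)/N) - f t‖ ≤ ε/2 := by
      intro t ht
      rw [Set.uIoc_of_le hle] at ht
      have ht1 : a k < t := ht.1
      have ht2 : t ≤ a (k+1) := ht.2
      have hk1N : ((k:ℝ)+1)/N ∈ Set.Icc (0:ℝ) 1 := by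
        constructor
        · positivity
        · rw [div_le_one hNpos]; push_cast; exact_mod_cast Nat.succ_le_of_lt hk'
      have htI : t ∈ Set.Icc (0:ℝ) 1 := by
        constructor
        · have : (0:ℝ) ≤ a k := by positivity
          linarith
        · have : a (k+1) ≤ 1 := by
            simp only [ha]
            rw [div_le_one hNpos]; push_cast; exact_mod_cast Nat.succ_le_of_lt hk'
          linarith
      have hdiff : a (k+1) - a k = 1 / N := by
        simp only [ha]; push_cast; field_simp; ring
      have hdist : dist ((k+1)/(N:ℝ)) t < δ := by
        rw [Real.dist_eq, abs_lt]
        have h1 : ((k:ℝ)+1)/N = a (k+1) := by simp only [ha]; push_cast; ring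
        rw [h1]
        constructor <;> nlinarith
      have h2 := hδ' _ hk1N _ htI hdist
      rw [dist_eq_norm] at h2
      exact le_of_lt h2
    have := intervalIntegral.norm_integral_le_of_norm_le_const hbound
    calc ‖∫ t in a k..a (k+1), (f ((k+1)/N) - f t)‖ ≤ (ε/2) * |a (k+1) - a k| := this
    _ = (ε/2) / N := by
        have hdiff2 : a (k+1) - a k = 1 / N := by
          simp only [ha]; push_cast; field_simp; ring
        rw [hdiff2, abs_of_pos (by positivity)]
        ring
  calc ‖∑ k ∈ Finset.range N, (((N:ℝ))⁻¹ • f ((k+1)/N) - ∫ t in a k..a (k+1), f t)‖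
      ≤ ∑ k ∈ Finset.range N, ‖((N:ℝ))⁻¹ • f ((k+1)/N) - ∫ t in a k..a (k+1), f t‖ :=
        norm_sum_le _ _
    _ ≤ ∑ _k ∈ Finset.range N, (ε/2)/N := Finset.sum_le_sum key
    _ = ε/2 := by rw [Finset.sum_const, Finset.card_range, nsmul_eq_mul]; field_simp
    _ < ε := by linarith

lemma inner_unitDir (s : ℝ) (y : EuclideanSpace ℝ (Fin 2)) :
    (⟪unitDir s, y⟫ : ℝ) = Real.cos s * y 0 + Real.sin s * y 1 := by
  simp [unitDir, PiLp.inner_apply, Fin.sum_univ_two, RCLike.inner_apply] <;> ring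

lemma L3 (r : ℝ) : (∫ t in (0:ℝ)..(2*π), Real.cos t * Real.cos (r * Real.cos t)) = 0 := by
  have hsplit : (∫ t in (0:ℝ)..(2*π), Real.cos t * Real.cos (r * Real.cos t))
      = (∫ t in (0:ℝ)..π, Real.cos t * Real.cos (r * Real.cos t))
        + ∫ t in π..(2*π), Real.cos t * Real.cos (r * Real.cos t) := by
    rw [integral_add_adjacent_intervals] <;>
      exact (by fun_prop : Continuous fun t => Real.cos t * Real.cos (r * Real.cos t)).intervalIntegrable _ _
  have hshift : (∫ t in π..(2*π), Real.cos t * Real.cos (r * Real.cos t))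
      = ∫ t in (0:ℝ)..π, Real.cos (t+π) * Real.cos (r * Real.cos (t+π)) := by
    rw [integral_comp_add_right (fun t => Real.cos t * Real.cos (r * Real.cos t)) π]
    norm_num [two_mul]
  have heq : ∀ t : ℝ, Real.cos (t+π) * Real.cos (r * Real.cos (t+π))
      = -(Real.cos t * Real.cos (r * Real.cos t)) := by
    intro t
    simp [Real.cos_add_pi]
  rw [hsplit, hshift]
  simp_rw [heq]
  rw [intervalIntegral.integral_neg]
  ring

lemma L4half (r : ℝ) : (∫ t in (0:ℝ)..π, Real.cos t * Real.sin (r * Real.cos t)) = π * J1 r := by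
  -- both sides equal 2 ∫_0^{π/2} sin u * sin (r sin u)
  have h1 : (∫ t in (0:ℝ)..π, Real.cos t * Real.sin (r * Real.cos t))
      = ∫ u in (-(π/2))..(π/2), Real.sin u * Real.sin (r * Real.sin u) := by
    have := integral_comp_sub_left (a := -(π/2)) (b := π/2)
      (fun t => Real.cos t * Real.sin (r * Real.cos t)) (π/2)
    simp only [show π/2 - π/2 = (0:ℝ) by ring, show π/2 - -(π/2) = π by ring] at this
    rw [← this]
    congr 1
    ext u
    rw [show π/2 - u = π/2 - u from rfl, Real.cos_pi_div_two_sub]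
  have heven : (∫ u in (-(π/2))..(0:ℝ), Real.sin u * Real.sin (r * Real.sin u))
      = ∫ u in (0:ℝ)..(π/2), Real.sin u * Real.sin (r * Real.sin u) := by
    have := integral_comp_neg (a := (0:ℝ)) (b := π/2)
      (fun u => Real.sin u * Real.sin (r * Real.sin u))
    simp only [neg_zero] at this
    rw [← this]
    congr 1
    ext u
    simp [Real.sin_neg, mul_neg, neg_mul, Real.sin_neg]
  have h2 : (∫ u in (-(π/2))..(π/2), Real.sin u * Real.sin (r * Real.sin u))
      = 2 * ∫ u in (0:ℝ)..(π/2), Real.sin u * Real.sin (r * Real.sin u) := by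
    rw [← integral_add_adjacent_intervals (b := (0:ℝ))
      ((by fun_prop : Continuous fun u => Real.sin u * Real.sin (r * Real.sin u)).intervalIntegrable _ _)
      ((by fun_prop : Continuous fun u => Real.sin u * Real.sin (r * Real.sin u)).intervalIntegrable _ _),
      heven]
    ring
  -- J1 side
  have hJsplit : π * J1 r = ∫ τ in (0:ℝ)..π, Real.cos (τ - r * Real.sin τ) := by
    rw [J1]
    have hπ : π ≠ 0 := ne_of_gt Real.pi_pos
    field_simp
  have hJ1 : (∫ τ in (0:ℝ)..π, Real.cos (τ - r * Real.sin τ))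
      = (∫ τ in (0:ℝ)..π, Real.cos τ * Real.cos (r * Real.sin τ))
        + ∫ τ in (0:ℝ)..π, Real.sin τ * Real.sin (r * Real.sin τ) := by
    rw [← integral_add
      ((by fun_prop : Continuous fun τ => Real.cos τ * Real.cos (r * Real.sin τ)).intervalIntegrable _ _)
      ((by fun_prop : Continuous fun τ => Real.sin τ * Real.sin (r * Real.sin τ)).intervalIntegrable _ _)]
    congr 1
    ext τ
    rw [Real.cos_sub]
  have hodd : (∫ τ in (0:ℝ)..π, Real.cos τ * Real.cos (r * Real.sin τ)) = 0 := by
    have := integral_comp_sub_left (a := (0:ℝ)) (b := π)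
      (fun τ => Real.cos τ * Real.cos (r * Real.sin τ)) π
    simp only [sub_zero, sub_self] at this
    have heq : ∀ τ : ℝ, Real.cos (π - τ) * Real.cos (r * Real.sin (π - τ))
        = -(Real.cos τ * Real.cos (r * Real.sin τ)) := by
      intro τ; simp [Real.cos_pi_sub, Real.sin_pi_sub]
    simp_rw [heq] at this
    rw [intervalIntegral.integral_neg] at this
    linarith [this]
  have hsym : (∫ τ in (0:ℝ)..π, Real.sin τ * Real.sin (r * Real.sin τ))
      = 2 * ∫ τ in (0:ℝ)..(π/2), Real.sin τ * Real.sin (r * Real.sin τ) := by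
    have hadj : (∫ τ in (0:ℝ)..π, Real.sin τ * Real.sin (r * Real.sin τ))
        = (∫ τ in (0:ℝ)..(π/2), Real.sin τ * Real.sin (r * Real.sin τ))
          + ∫ τ in (π/2)..π, Real.sin τ * Real.sin (r * Real.sin τ) := by
      rw [integral_add_adjacent_intervals] <;>
        exact (by fun_prop : Continuous fun τ => Real.sin τ * Real.sin (r * Real.sin τ)).intervalIntegrable _ _
    have := integral_comp_sub_left (a := (0:ℝ)) (b := π/2)
      (fun τ => Real.sin τ * Real.sin (r * Real.sin τ)) π
    simp only [sub_zero, show π - π/2 = π/2 by ring] at this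
    have heq : ∀ τ : ℝ, Real.sin (π - τ) * Real.sin (r * Real.sin (π - τ))
        = Real.sin τ * Real.sin (r * Real.sin τ) := by
      intro τ; simp [Real.sin_pi_sub]
    simp_rw [heq] at this
    rw [hadj, ← this]
    ring
  rw [h1, h2, hJsplit, hJ1, hodd, hsym]
  ring

lemma L4 (r : ℝ) : (∫ t in (0:ℝ)..(2*π), Real.cos t * Real.sin (r * Real.cos t)) = 2 * π * J1 r := by
  have hsplit : (∫ t in (0:ℝ)..(2*π), Real.cos t * Real.sin (r * Real.cos t))
      = (∫ t in (0:ℝ)..π, Real.cos t * Real.sin (r * Real.cos t))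
        + ∫ t in π..(2*π), Real.cos t * Real.sin (r * Real.cos t) := by
    rw [integral_add_adjacent_intervals] <;>
      exact (by fun_prop : Continuous fun t => Real.cos t * Real.sin (r * Real.cos t)).intervalIntegrable _ _
  have hshift : (∫ t in π..(2*π), Real.cos t * Real.sin (r * Real.cos t))
      = ∫ t in (0:ℝ)..π, Real.cos (t+π) * Real.sin (r * Real.cos (t+π)) := by
    rw [integral_comp_add_right (fun t => Real.cos t * Real.sin (r * Real.cos t)) π]
    norm_num [two_mul]
  have heq : ∀ t : ℝ, Real.cos (t+π) * Real.sin (r * Real.cos (t+π))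
      = Real.cos t * Real.sin (r * Real.cos t) := by
    intro t
    simp [Real.cos_add_pi, mul_neg]
  rw [hsplit, hshift]
  simp_rw [heq]
  rw [L4half]
  ring

lemma C1 (r : ℝ) :
    (∫ t in (0:ℝ)..(2*π), ((Real.sin t : ℂ) * Complex.exp (Complex.I * (r * Real.cos t : ℝ)))) = 0 := by
  set f : ℝ → ℂ := fun t => (Real.sin t : ℂ) * Complex.exp (Complex.I * (r * Real.cos t : ℝ)) with hf
  have h := integral_comp_sub_left (a := (0:ℝ)) (b := 2*π) f (2*π)
  simp only [sub_zero, sub_self] at h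
  have heq : ∀ t : ℝ, f (2*π - t) = -(f t) := by
    intro t
    simp only [hf]
    have h1 : Real.sin (2*π - t) = -Real.sin t := by
      rw [Real.sin_sub]; simp [Real.sin_two_pi, Real.cos_two_pi]
    have h2 : Real.cos (2*π - t) = Real.cos t := by
      rw [Real.cos_sub]; simp [Real.sin_two_pi, Real.cos_two_pi]
    rw [h1, h2]
    push_cast
    ring
  simp_rw [heq] at h
  rw [intervalIntegral.integral_neg] at h
  have : (2:ℂ) * ∫ t in (0:ℝ)..(2*π), f t = 0 := by rw [two_mul]; linear_combination -h
  have h2 : (2:ℂ) ≠ 0 := two_ne_zero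
  exact (mul_eq_zero.mp this).resolve_left h2

lemma C3 (r : ℝ) :
    (∫ t in (0:ℝ)..(2*π), ((Real.cos t : ℂ) * Complex.exp (Complex.I * (r * Real.cos t : ℝ))))
      = 2 * π * J1 r * Complex.I := by
  have hexp : ∀ t : ℝ, (Real.cos t : ℂ) * Complex.exp (Complex.I * (r * Real.cos t : ℝ))
      = ((Real.cos t * Real.cos (r * Real.cos t) : ℝ) : ℂ)
        + ((Real.cos t * Real.sin (r * Real.cos t) : ℝ) : ℂ) * Complex.I := by
    intro t
    rw [mul_comm Complex.I, Complex.exp_mul_I, ← Complex.ofReal_cos, ← Complex.ofReal_sin]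
    push_cast
    ring
  simp_rw [hexp]
  rw [integral_add ((by fun_prop :
        Continuous fun t => ((Real.cos t * Real.cos (r * Real.cos t) : ℝ) : ℂ)).intervalIntegrable _ _)
      (((by fun_prop :
        Continuous fun t => ((Real.cos t * Real.sin (r * Real.cos t) : ℝ) : ℂ)).intervalIntegrable _ _).mul_const _),
    intervalIntegral.integral_mul_const, intervalIntegral.integral_ofReal,
    intervalIntegral.integral_ofReal, L3, L4]
  push_cast
  ring


lemma key_integral (ω : ℝ) (x ξ : EuclideanSpace ℝ (Fin 2)) (hx : x ≠ 0) :
    (∫ s in (0:ℝ)..(2*π),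
        ((⟪unitDir s, ξ⟫ : ℝ) : ℂ) *
          Complex.exp (Complex.I * (ω : ℂ) * ((⟪unitDir s, x⟫ : ℝ) : ℂ)))
      = (2*π) * (Complex.I * ((⟪‖x‖⁻¹ • x, ξ⟫ : ℝ) : ℂ) * ((J1 (ω * ‖x‖) : ℝ) : ℂ)) := by
  have hnorm : ‖x‖ ≠ 0 := norm_ne_zero_iff.mpr hx
  set z : ℂ := (x 0 : ℂ) + (x 1 : ℂ) * Complex.I with hz
  have hre : z.re = x 0 := by simp [hz]
  have him : z.im = x 1 := by simp [hz]
  have hzne : z ≠ 0 := by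
    intro h
    apply hx
    have h0 : x 0 = 0 := by rw [← hre, h]; simp
    have h1 : x 1 = 0 := by rw [← him, h]; simp
    ext i
    fin_cases i <;> simpa
  have habs : ‖z‖ = ‖x‖ := by
    rw [Complex.norm_def, Complex.normSq_apply, hre, him, EuclideanSpace.norm_eq]
    simp [Fin.sum_univ_two, Real.norm_eq_abs, sq_abs]
    ring_nf
  set α : ℝ := Complex.arg z with hα
  have hx0 : x 0 = ‖x‖ * Real.cos α := by
    rw [hα, Complex.cos_arg hzne, hre, habs]
    field_simp
  have hx1 : x 1 = ‖x‖ * Real.sin α := by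
    rw [hα, Complex.sin_arg, him, habs]
    field_simp
  set r : ℝ := ω * ‖x‖ with hr
  set A : ℝ := Real.cos α * ξ 0 + Real.sin α * ξ 1 with hA
  set B : ℝ := -Real.sin α * ξ 0 + Real.cos α * ξ 1 with hB
  set g : ℝ → ℂ := fun t =>
    ((A * Real.cos t + B * Real.sin t : ℝ) : ℂ) * Complex.exp (Complex.I * ((r * Real.cos t : ℝ) : ℂ))
    with hg
  have hpoint : ∀ s : ℝ,
      ((⟪unitDir s, ξ⟫ : ℝ) : ℂ) * Complex.exp (Complex.I * (ω : ℂ) * ((⟪unitDir s, x⟫ : ℝ) : ℂ))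
        = g (s - α) := by
    intro s
    rw [inner_unitDir, inner_unitDir, hg]
    have harg : ω * (Real.cos s * x 0 + Real.sin s * x 1) = r * Real.cos (s - α) := by
      rw [Real.cos_sub, hx0, hx1, hr]; ring
    have hcoef : Real.cos s * ξ 0 + Real.sin s * ξ 1
        = A * Real.cos (s - α) + B * Real.sin (s - α) := by
      rw [Real.cos_sub, Real.sin_sub, hA, hB]
      linear_combination -(Real.cos s * ξ 0 + Real.sin s * ξ 1) * (Real.sin_sq_add_cos_sq α)
    rw [hcoef]
    congr 1
    rw [← harg]
    push_cast
    ring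
  simp_rw [hpoint]
  have hshift : (∫ s in (0:ℝ)..(2*π), g (s - α)) = ∫ t in (0:ℝ)-α..(2*π)-α, g t :=
    integral_comp_sub_right g α
  have hper : Function.Periodic g (2*π) := by
    intro t
    simp only [hg, Real.cos_add_two_pi, Real.sin_add_two_pi]
  have hper2 : (∫ t in (0:ℝ)-α..(2*π)-α, g t) = ∫ t in (0:ℝ)..(2*π), g t := by
    have := hper.intervalIntegral_add_eq (-α) 0
    simpa [zero_sub, sub_eq_neg_add, add_comm] using this
  rw [hshift, hper2]
  have hgsplit : ∀ t : ℝ, g t =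
      (A:ℂ) * ((Real.cos t : ℂ) * Complex.exp (Complex.I * ((r * Real.cos t : ℝ) : ℂ)))
        + (B:ℂ) * ((Real.sin t : ℂ) * Complex.exp (Complex.I * ((r * Real.cos t : ℝ) : ℂ))) := by
    intro t
    rw [hg]
    push_cast
    ring
  simp_rw [hgsplit]
  rw [integral_add (((by fun_prop :
        Continuous fun t => (A:ℂ) * ((Real.cos t : ℂ) * Complex.exp (Complex.I * ((r * Real.cos t : ℝ) : ℂ))))).intervalIntegrable _ _)
      (((by fun_prop :
        Continuous fun t => (B:ℂ) * ((Real.sin t : ℂ) * Complex.exp (Complex.I * ((r * Real.cos t : ℝ) : ℂ))))).intervalIntegrable _ _),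
    intervalIntegral.integral_const_mul, intervalIntegral.integral_const_mul, C1, C3]
  have hinner : (⟪‖x‖⁻¹ • x, ξ⟫ : ℝ) = A := by
    rw [real_inner_smul_left]
    have : (⟪x, ξ⟫ : ℝ) = x 0 * ξ 0 + x 1 * ξ 1 := by
      simp [PiLp.inner_apply, Fin.sum_univ_two, RCLike.inner_apply] <;> ring
    rw [this, hx0, hx1, hA]
    field_simp
  rw [hinner]
  push_cast
  ring

/-- The weighted discrete mean over `N` equispaced directions converges to
`i ⟨x/‖x‖, ξ⟩ J₁(ω‖x‖)`. -/
theorem weighted_discrete_mean_tendsto_J1 (ω : ℝ) (x ξ : EuclideanSpace ℝ (Fin 2))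
    (hx : x ≠ 0) :
    Tendsto
      (fun N : ℕ =>
        (1 / (N : ℂ)) *
          ∑ n ∈ Finset.Icc 1 N,
            ((⟪unitDir (2 * π * n / N), ξ⟫ : ℝ) : ℂ) *
              Complex.exp
                (Complex.I * (ω : ℂ) * ((⟪unitDir (2 * π * n / N), x⟫ : ℝ) : ℂ)))
      atTop (nhds (Complex.I * ((⟪‖x‖⁻¹ • x, ξ⟫ : ℝ) : ℂ) * ((J1 (ω * ‖x‖) : ℝ) : ℂ))) := by

  set f : ℝ → ℂ := fun s =>
    ((⟪unitDir s, ξ⟫ : ℝ) : ℂ) *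
      Complex.exp (Complex.I * (ω : ℂ) * ((⟪unitDir s, x⟫ : ℝ) : ℂ)) with hf
  set F : ℝ → ℂ := fun s => f (2 * π * s) with hF
  have hcin : ∀ y : EuclideanSpace ℝ (Fin 2), Continuous fun s : ℝ => (⟪unitDir s, y⟫ : ℝ) := by
    intro y
    have h : (fun s : ℝ => (⟪unitDir s, y⟫ : ℝ))
        = fun s => Real.cos s * y 0 + Real.sin s * y 1 := funext (fun s => inner_unitDir s y)
    rw [h]; fun_prop
  have hfc : Continuous f := by
    apply Continuous.mul
    · exact Complex.continuous_ofReal.comp (hcin ξ)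
    · exact Complex.continuous_exp.comp
        (continuous_const.mul (Complex.continuous_ofReal.comp (hcin x)))
  have hFc : Continuous F := hfc.comp (by fun_prop)
  have h := riemann_sum_tendsto F hFc
  have hfun : (fun N : ℕ =>
        (1 / (N : ℂ)) *
          ∑ n ∈ Finset.Icc 1 N,
            ((⟪unitDir (2 * π * n / N), ξ⟫ : ℝ) : ℂ) *
              Complex.exp
                (Complex.I * (ω : ℂ) * ((⟪unitDir (2 * π * n / N), x⟫ : ℝ) : ℂ)))
      = fun N : ℕ => ((N : ℝ))⁻¹ • ∑ n ∈ Finset.Icc 1 N, F (n / N) := by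
    funext N
    have hterm : ∀ n : ℕ, F ((n : ℝ) / N)
        = ((⟪unitDir (2 * π * n / N), ξ⟫ : ℝ) : ℂ) *
            Complex.exp
              (Complex.I * (ω : ℂ) * ((⟪unitDir (2 * π * n / N), x⟫ : ℝ) : ℂ)) := by
      intro n
      simp only [hF, hf]
      rw [mul_div_assoc]
    simp_rw [hterm]
    rw [Complex.real_smul]
    push_cast
    ring
  have hlim : (∫ t in (0:ℝ)..1, F t)
      = Complex.I * ((⟪‖x‖⁻¹ • x, ξ⟫ : ℝ) : ℂ) * ((J1 (ω * ‖x‖) : ℝ) : ℂ) := by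
    have h2 : (∫ t in (0:ℝ)..1, F t) = (2*π)⁻¹ • ∫ s in (2*π*0)..(2*π*1), f s := by
      simp only [hF]
      exact intervalIntegral.integral_comp_mul_left f (by positivity)
    rw [h2, show (2*π*0 : ℝ) = 0 by ring, show (2*π*1 : ℝ) = 2*π by ring,
      key_integral ω x ξ hx, Complex.real_smul]
    have hπ : (π : ℝ) ≠ 0 := ne_of_gt Real.pi_pos
    have hπC : (π : ℂ) ≠ 0 := by exact_mod_cast hπ
    push_cast
    field_simp
  rw [hfun, ← hlim]
  exact h
end

section
/- J₀(u) tends to 0 as u → +∞; equivalently, the function u ↦ (1/π) ∫₀^π cos(u·sin τ) dτ tends to 0 along the filter at +∞. -/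
open MeasureTheory Real Filter
open scoped RealInnerProductSpace

lemma key_bound (u a : ℝ) (hu : 0 < u) (ha : 0 ≤ a) (ha2 : a < π/2) :
    |∫ τ in (0:ℝ)..a, Real.cos (u * Real.sin τ)| ≤
      1/(u * Real.cos a) + a/(u * Real.cos a ^ 2) := by
  have hpi := Real.pi_pos
  have hca : 0 < Real.cos a := Real.cos_pos_of_mem_Ioo ⟨by linarith, ha2⟩
  have hcos : ∀ τ ∈ Set.Icc (0:ℝ) a, Real.cos a ≤ Real.cos τ := fun τ hτ =>
    Real.cos_le_cos_of_nonneg_of_le_pi hτ.1 (by linarith) hτ.2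
  have hcpos : ∀ τ ∈ Set.Icc (0:ℝ) a, 0 < Real.cos τ := fun τ hτ => lt_of_lt_of_le hca (hcos τ hτ)
  set F : ℝ → ℝ := fun τ => Real.sin (u * Real.sin τ) / (u * Real.cos τ) with hF
  set g : ℝ → ℝ := fun τ => Real.sin (u * Real.sin τ) * Real.sin τ / (u * Real.cos τ ^ 2) with hg
  have hderiv : ∀ τ ∈ Set.uIcc (0:ℝ) a, HasDerivAt F (Real.cos (u * Real.sin τ) + g τ) τ := by
    intro τ hτ
    rw [Set.uIcc_of_le ha] at hτ
    have hcτ : 0 < Real.cos τ := hcpos τ hτ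
    have h1 : HasDerivAt (fun τ => Real.sin (u * Real.sin τ))
        (Real.cos (u * Real.sin τ) * (u * Real.cos τ)) τ := by
      have := ((Real.hasDerivAt_sin τ).const_mul u).sin
      simpa using this
    have h2 : HasDerivAt (fun τ => u * Real.cos τ) (u * (-Real.sin τ)) τ :=
      (Real.hasDerivAt_cos τ).const_mul u
    have h3 : HasDerivAt F _ τ := h1.div h2 (by positivity)
    convert h3 using 1
    simp only [hg]
    field_simp
    ring
  have hcont : ContinuousOn (fun τ => Real.cos (u * Real.sin τ) + g τ) (Set.uIcc 0 a) := by
    rw [Set.uIcc_of_le ha]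
    apply ContinuousOn.add
    · exact (Real.continuous_cos.comp (continuous_const.mul Real.continuous_sin)).continuousOn
    · apply ContinuousOn.div
      · exact ((Real.continuous_sin.comp (continuous_const.mul Real.continuous_sin)).mul
          Real.continuous_sin).continuousOn
      · exact (continuous_const.mul (Real.continuous_cos.pow 2)).continuousOn
      · intro τ hτ; have := hcpos τ hτ; positivity
  have hgcont : ContinuousOn g (Set.uIcc 0 a) := by
    rw [Set.uIcc_of_le ha]
    apply ContinuousOn.div
    · exact ((Real.continuous_sin.comp (continuous_const.mul Real.continuous_sin)).mul
        Real.continuous_sin).continuousOn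
    · exact (continuous_const.mul (Real.continuous_cos.pow 2)).continuousOn
    · intro τ hτ; have := hcpos τ hτ; positivity
  have hint : IntervalIntegrable (fun τ => Real.cos (u * Real.sin τ) + g τ) volume 0 a :=
    hcont.intervalIntegrable
  have hgint : IntervalIntegrable g volume 0 a := hgcont.intervalIntegrable
  have heq := intervalIntegral.integral_eq_sub_of_hasDerivAt hderiv hint
  have hF0 : F 0 = 0 := by simp [hF]
  have hcint : IntervalIntegrable (fun τ => Real.cos (u * Real.sin τ)) volume 0 a :=
    (Real.continuous_cos.comp (continuous_const.mul Real.continuous_sin)).intervalIntegrable 0 a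
  rw [intervalIntegral.integral_add hcint hgint, hF0, sub_zero] at heq
  have hmain : ∫ τ in (0:ℝ)..a, Real.cos (u * Real.sin τ) = F a - ∫ τ in (0:ℝ)..a, g τ := by
    linarith [heq]
  rw [hmain]
  have hFa : |F a| ≤ 1/(u * Real.cos a) := by
    rw [hF, abs_div, abs_of_pos (by positivity : (0:ℝ) < u * Real.cos a)]
    apply div_le_div_of_nonneg_right ?_ (by positivity)
    exact abs_le.mpr ⟨Real.neg_one_le_sin _, Real.sin_le_one _⟩
  have hgb : |∫ τ in (0:ℝ)..a, g τ| ≤ a/(u * Real.cos a ^ 2) := by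
    have := intervalIntegral.norm_integral_le_of_norm_le_const
      (C := 1/(u * Real.cos a ^ 2)) (f := g) (a := (0:ℝ)) (b := a) ?_
    · rw [Real.norm_eq_abs] at this
      calc |∫ τ in (0:ℝ)..a, g τ| ≤ 1/(u * Real.cos a ^ 2) * |a - 0| := this
        _ = a/(u * Real.cos a ^ 2) := by rw [sub_zero, abs_of_nonneg ha]; ring
    · intro τ hτ
      rw [Set.uIoc_of_le ha] at hτ
      have hτ' : τ ∈ Set.Icc (0:ℝ) a := ⟨le_of_lt hτ.1, hτ.2⟩
      have h1 : Real.cos a ≤ Real.cos τ := hcos τ hτ'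
      have hcτ : 0 < Real.cos τ := hcpos τ hτ'
      have h2 : u * Real.cos a ^ 2 ≤ u * Real.cos τ ^ 2 :=
        mul_le_mul_of_nonneg_left (pow_le_pow_left₀ hca.le h1 2) hu.le
      rw [Real.norm_eq_abs, hg, abs_div]
      rw [abs_of_pos (by positivity : (0:ℝ) < u * Real.cos τ ^ 2)]
      apply div_le_div₀ (by positivity)
        ?_ (by positivity) h2
      calc |Real.sin (u * Real.sin τ) * Real.sin τ| = |Real.sin (u * Real.sin τ)| * |Real.sin τ| := abs_mul _ _
        _ ≤ 1 * 1 := mul_le_mul (abs_le.mpr ⟨Real.neg_one_le_sin _, Real.sin_le_one _⟩)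
              (abs_le.mpr ⟨Real.neg_one_le_sin _, Real.sin_le_one _⟩) (abs_nonneg _) zero_le_one
        _ = 1 := one_mul 1
  calc |F a - ∫ τ in (0:ℝ)..a, g τ| ≤ |F a| + |∫ τ in (0:ℝ)..a, g τ| := abs_sub _ _
    _ ≤ _ := add_le_add hFa hgb

lemma sym_eq (u : ℝ) : ∫ τ in (0:ℝ)..π, Real.cos (u * Real.sin τ)
    = 2 * ∫ τ in (0:ℝ)..(π/2), Real.cos (u * Real.sin τ) := by
  have hc : Continuous fun τ => Real.cos (u * Real.sin τ) :=
    Real.continuous_cos.comp (continuous_const.mul Real.continuous_sin)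
  have hsplit := intervalIntegral.integral_add_adjacent_intervals
    (μ := volume) (hc.intervalIntegrable 0 (π/2)) (hc.intervalIntegrable (π/2) π)
  have h2 : ∫ τ in (π/2)..π, Real.cos (u * Real.sin τ)
      = ∫ τ in (0:ℝ)..(π/2), Real.cos (u * Real.sin τ) := by
    have := intervalIntegral.integral_comp_sub_left (a := (0:ℝ)) (b := π/2)
      (f := fun τ => Real.cos (u * Real.sin τ)) π
    simp only [Real.sin_pi_sub, sub_zero, show π - π/2 = π/2 from by ring] at this
    exact this.symm
  rw [← hsplit, h2]; ring

/-- `J₀(u) → 0` as `u → +∞`. -/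
theorem J0_tendsto_zero : Tendsto J0 atTop (nhds 0) := by
  rw [Metric.tendsto_atTop]
  intro ε hε
  have hπ := Real.pi_pos
  set δ := min (π/4) (π*ε/8) with hδ
  have hδpos : 0 < δ := lt_min (by positivity) (by positivity)
  have hδle : δ ≤ π*ε/8 := min_le_right _ _
  have hδle' : δ ≤ π/4 := min_le_left _ _
  set a := π/2 - δ with hadef
  have ha0 : 0 ≤ a := by rw [hadef]; linarith
  have ha2 : a < π/2 := by rw [hadef]; linarith
  have hca : 0 < Real.cos a := Real.cos_pos_of_mem_Ioo ⟨by linarith, ha2⟩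
  set K := 1/Real.cos a + a/(Real.cos a^2) with hK
  have hK0 : 0 < K := by
    rw [hK]
    have h1 : 0 < 1/Real.cos a := by positivity
    have h2 : 0 ≤ a/(Real.cos a^2) := div_nonneg ha0 (by positivity)
    linarith
  clear_value δ a K
  refine ⟨max 1 (8*K/(π*ε)), fun u hu => ?_⟩
  have hu1 : (1:ℝ) ≤ u := le_trans (le_max_left _ _) hu
  have hu0 : 0 < u := by linarith
  have hu2 : 8*K/(π*ε) ≤ u := le_trans (le_max_right _ _) hu
  have hKu : K/u ≤ π*ε/8 := by
    rw [div_le_iff₀ hu0]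
    rw [div_le_iff₀ (by positivity : (0:ℝ) < π*ε)] at hu2
    nlinarith
  have htail : |∫ τ in a..(π/2), Real.cos (u * Real.sin τ)| ≤ δ := by
    have hb := intervalIntegral.norm_integral_le_of_norm_le_const (C := 1)
      (f := fun τ => Real.cos (u * Real.sin τ)) (a := a) (b := π/2)
      (fun x _ => by rw [Real.norm_eq_abs]; exact Real.abs_cos_le_one _)
    rw [Real.norm_eq_abs] at hb
    calc |∫ τ in a..(π/2), Real.cos (u * Real.sin τ)| ≤ 1 * |π/2 - a| := hb
      _ = δ := by rw [one_mul, abs_of_nonneg (by linarith), hadef]; ring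
  have hkey' : |∫ τ in (0:ℝ)..a, Real.cos (u * Real.sin τ)| ≤ K/u := by
    calc |∫ τ in (0:ℝ)..a, Real.cos (u * Real.sin τ)|
        ≤ 1/(u * Real.cos a) + a/(u * Real.cos a ^ 2) := key_bound u a hu0 ha0 ha2
      _ = K/u := by rw [hK]; field_simp
  have hc : Continuous fun τ => Real.cos (u * Real.sin τ) :=
    Real.continuous_cos.comp (continuous_const.mul Real.continuous_sin)
  have hsplit := intervalIntegral.integral_add_adjacent_intervals
    (μ := volume) (hc.intervalIntegrable 0 a) (hc.intervalIntegrable a (π/2))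
  have hhalf : |∫ τ in (0:ℝ)..(π/2), Real.cos (u * Real.sin τ)| ≤ K/u + δ := by
    rw [← hsplit]
    exact (abs_add_le _ _).trans (add_le_add hkey' htail)
  have hb : |∫ τ in (0:ℝ)..(π/2), Real.cos (u * Real.sin τ)| ≤ π*ε/4 := by
    calc |∫ τ in (0:ℝ)..(π/2), Real.cos (u * Real.sin τ)| ≤ K/u + δ := hhalf
      _ ≤ π*ε/8 + π*ε/8 := add_le_add hKu hδle
      _ = π*ε/4 := by ring
  rw [Real.dist_eq, sub_zero]
  have heq : |J0 u| = (1/π) * (2 * |∫ τ in (0:ℝ)..(π/2), Real.cos (u * Real.sin τ)|) := by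
    rw [J0, sym_eq, abs_mul, abs_mul, abs_of_pos (by positivity : (0:ℝ) < 1/π)]
    norm_num
  calc |J0 u| = (1/π) * (2 * |∫ τ in (0:ℝ)..(π/2), Real.cos (u * Real.sin τ)|) := heq
    _ ≤ (1/π) * (2 * (π*ε/4)) := by
        apply mul_le_mul_of_nonneg_left (by linarith) (by positivity)
    _ = ε/2 := by field_simp; ring
    _ < ε := by linarith
end

section
/- J₁(u) tends to 0 as u → +∞; equivalently, the function u ↦ (1/π) ∫₀^π cos(τ − u·sin τ) dτ tends to 0 along the filter at +∞. -/
open MeasureTheory Real Filter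
open scoped RealInnerProductSpace

lemma weight_integrableOn :
    IntegrableOn (fun s : ℝ => s / Real.sqrt (1 - s ^ 2)) (Set.Ioo 0 1) := by
  have hb : IntegrableOn (fun s : ℝ => ((1 : ℝ) - s) ^ (-(1/2) : ℝ)) (Set.Ioo 0 1) := by
    have h0 : IntervalIntegrable (fun x : ℝ => x ^ (-(1/2) : ℝ)) volume 0 1 :=
      intervalIntegral.intervalIntegrable_rpow' (by norm_num)
    have h2 := (h0.comp_sub_left 1).symm
    norm_num at h2
    rw [intervalIntegrable_iff_integrableOn_Ioc_of_le (by norm_num : (0:ℝ) ≤ 1)] at h2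
    exact h2.mono_set Set.Ioo_subset_Ioc_self
  have hmeas : AEStronglyMeasurable (fun s : ℝ => s / Real.sqrt (1 - s ^ 2))
      (volume.restrict (Set.Ioo (0:ℝ) 1)) :=
    (measurable_id.div ((Real.continuous_sqrt.comp (by continuity)).measurable)).aestronglyMeasurable
  refine hb.mono' hmeas ?_
  refine (ae_restrict_iff' measurableSet_Ioo).2 (ae_of_all _ fun s hs => ?_)
  obtain ⟨h0, h1⟩ := hs
  have h1s : (0:ℝ) < 1 - s := by linarith
  have hsq : Real.sqrt (1 - s ^ 2) = Real.sqrt (1 - s) * Real.sqrt (1 + s) := by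
    rw [show (1:ℝ) - s ^ 2 = (1 - s) * (1 + s) by ring, Real.sqrt_mul h1s.le]
  have hrpow : ((1:ℝ) - s) ^ (-(1/2) : ℝ) = (Real.sqrt (1 - s))⁻¹ := by
    rw [Real.rpow_neg h1s.le, Real.sqrt_eq_rpow]
  rw [hrpow, Real.norm_eq_abs, abs_div, abs_of_pos h0, abs_of_nonneg (Real.sqrt_nonneg _), hsq]
  have hs1 : (1:ℝ) ≤ Real.sqrt (1 + s) := by
    nlinarith [Real.sq_sqrt (show (0:ℝ) ≤ 1 + s by linarith), Real.sqrt_nonneg (1 + s)]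
  have hpos : 0 < Real.sqrt (1 - s) := Real.sqrt_pos.2 h1s
  have hpos2 : 0 < Real.sqrt (1 + s) := by linarith
  rw [div_le_iff₀ (by positivity), inv_mul_eq_div, mul_comm, mul_div_assoc, div_self hpos.ne',
    mul_one]
  linarith

lemma RL_key : Tendsto (fun u : ℝ => ∫ s in Set.Ioo (0:ℝ) 1,
    s / Real.sqrt (1 - s ^ 2) * Real.sin (u * s)) atTop (nhds 0) := by
  set w : ℝ → ℝ := fun s => s / Real.sqrt (1 - s ^ 2) with hw
  set g : ℝ → ℂ := (Set.Ioo (0:ℝ) 1).indicator (fun s => ((w s : ℝ) : ℂ)) with hgdef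
  have hgint : Integrable g := by
    rw [hgdef, integrable_indicator_iff measurableSet_Ioo]
    exact weight_integrableOn.ofReal
  have hRL : Tendsto (fun v : ℝ => ∫ x : ℝ, Real.fourierChar (-(x * v)) • g x)
      (cocompact ℝ) (nhds 0) := Real.tendsto_integral_exp_smul_cocompact g
  have hdiv : Tendsto (fun u : ℝ => u / (2 * π)) atTop (cocompact ℝ) := by
    rw [cocompact_eq_atBot_atTop]
    exact (tendsto_id.atTop_div_const (by positivity)).mono_right le_sup_right
  have hcomp := (hRL.comp hdiv)
  have him := (Complex.continuous_im.tendsto 0).comp hcomp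
  simp only [Complex.zero_im] at him
  have key : ∀ u : ℝ, ((∫ x : ℝ, Real.fourierChar (-(x * (u / (2 * π)))) • g x).im)
      = -∫ s in Set.Ioo (0:ℝ) 1, w s * Real.sin (u * s) := by
    intro u
    have hind : (fun x : ℝ => Real.fourierChar (-(x * (u / (2 * π)))) • g x)
        = (Set.Ioo (0:ℝ) 1).indicator
          (fun x => Real.fourierChar (-(x * (u / (2 * π)))) • ((w x : ℝ) : ℂ)) := by
      funext x
      by_cases hx : x ∈ Set.Ioo (0:ℝ) 1
      · simp [hgdef, Set.indicator_of_mem hx]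
      · simp [hgdef, Set.indicator_of_notMem hx]
    rw [hind, integral_indicator measurableSet_Ioo]
    have hint2 : IntegrableOn
        (fun x => Real.fourierChar (-(x * (u / (2 * π)))) • ((w x : ℝ) : ℂ))
        (Set.Ioo (0:ℝ) 1) := by
      refine Integrable.mono' weight_integrableOn ?_ ?_
      · exact ((Real.continuous_fourierChar.comp (by continuity)).aestronglyMeasurable.smul
          weight_integrableOn.ofReal.aestronglyMeasurable)
      · refine (ae_restrict_iff' measurableSet_Ioo).2 (ae_of_all _ fun x hx => ?_)
        have hwnn : (0:ℝ) ≤ x / Real.sqrt (1 - x ^ 2) :=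
          div_nonneg hx.1.le (Real.sqrt_nonneg _)
        rw [Circle.norm_smul]
        simp only [Complex.norm_real, Real.norm_eq_abs, hw]
        rw [abs_div, abs_of_pos hx.1, abs_of_nonneg (Real.sqrt_nonneg _)]
    rw [← RCLike.im_eq_complex_im, ← integral_im hint2, ← integral_neg]
    simp only [RCLike.im_eq_complex_im]
    refine setIntegral_congr_fun measurableSet_Ioo fun x _ => ?_
    have harg : 2 * π * -(x * (u / (2 * π))) = -(u * x) := by
      field_simp
    rw [Circle.smul_def, smul_eq_mul, Real.fourierChar_apply, harg, Complex.exp_mul_I]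
    simp only [Complex.add_im, Complex.mul_im, Complex.add_re, Complex.mul_re,
      Complex.cos_ofReal_im, Complex.sin_ofReal_re, Complex.sin_ofReal_im,
      Complex.cos_ofReal_re, Complex.ofReal_re, Complex.ofReal_im,
      Complex.I_re, Complex.I_im, Real.sin_neg]
    ring
  have : Tendsto (fun u : ℝ => -∫ s in Set.Ioo (0:ℝ) 1, w s * Real.sin (u * s)) atTop (nhds 0) := by
    refine him.congr fun u => ?_
    exact (key u)
  simpa using this.neg

lemma sin_image_Ioo : Real.sin '' Set.Ioo 0 (π/2) = Set.Ioo 0 1 := by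
  ext y
  constructor
  · rintro ⟨x, ⟨hx0, hx1⟩, rfl⟩
    have hπ := Real.pi_pos
    constructor
    · exact Real.sin_pos_of_pos_of_lt_pi hx0 (by linarith)
    · have := Real.strictMonoOn_sin (a := x) (b := π/2)
        ⟨by linarith, by linarith⟩ ⟨by linarith, le_refl _⟩ hx1
      simpa using this
  · rintro ⟨hy0, hy1⟩
    refine ⟨Real.arcsin y, ⟨Real.arcsin_pos.2 hy0, ?_⟩, Real.sin_arcsin (by linarith) hy1.le⟩
    exact Real.arcsin_lt_pi_div_two.2 hy1

lemma change_of_var (u : ℝ) :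
    ∫ τ in Set.Ioo (0:ℝ) (π/2), Real.sin τ * Real.sin (u * Real.sin τ)
      = ∫ s in Set.Ioo (0:ℝ) 1, s / Real.sqrt (1 - s ^ 2) * Real.sin (u * s) := by
  have hderiv : ∀ x ∈ Set.Ioo (0:ℝ) (π/2),
      HasDerivWithinAt Real.sin (Real.cos x) (Set.Ioo 0 (π/2)) x :=
    fun x _ => (Real.hasDerivAt_sin x).hasDerivWithinAt
  have hinj : Set.InjOn Real.sin (Set.Ioo 0 (π/2)) := by
    apply Real.injOn_sin.mono
    intro x hx
    have hπ := Real.pi_pos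
    exact ⟨by linarith [hx.1, Real.pi_pos], by linarith [hx.2]⟩
  have h := MeasureTheory.integral_image_eq_integral_abs_deriv_smul measurableSet_Ioo hderiv hinj
    (fun s => s / Real.sqrt (1 - s ^ 2) * Real.sin (u * s))
  rw [sin_image_Ioo] at h
  rw [h]
  refine setIntegral_congr_fun measurableSet_Ioo fun τ hτ => ?_
  have hπ := Real.pi_pos
  have hc : 0 < Real.cos τ := Real.cos_pos_of_mem_Ioo ⟨by linarith [hτ.1], hτ.2⟩
  have hsq : Real.sqrt (1 - Real.sin τ ^ 2) = Real.cos τ := by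
    rw [show (1:ℝ) - Real.sin τ ^ 2 = Real.cos τ ^ 2 by
      have := Real.sin_sq_add_cos_sq τ; linarith]
    exact Real.sqrt_sq hc.le
  rw [smul_eq_mul, abs_of_pos hc, hsq]
  field_simp

lemma J1_eq (u : ℝ) : J1 u = (2 / π) *
    ∫ τ in Set.Ioo (0:ℝ) (π/2), Real.sin τ * Real.sin (u * Real.sin τ) := by
  have hπ := Real.pi_pos
  have hcont : Continuous fun τ : ℝ => Real.cos (τ - u * Real.sin τ) := by continuity
  have h1 : IntervalIntegrable (fun τ : ℝ => Real.cos (τ - u * Real.sin τ)) volume 0 (π/2) :=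
    hcont.intervalIntegrable _ _
  have h2 : IntervalIntegrable (fun τ : ℝ => Real.cos (τ - u * Real.sin τ)) volume (π/2) π :=
    hcont.intervalIntegrable _ _
  have hsplit := intervalIntegral.integral_add_adjacent_intervals h1 h2
  have hrefl : (∫ τ in (π/2:ℝ)..π, Real.cos (τ - u * Real.sin τ))
      = ∫ τ in (0:ℝ)..(π/2), Real.cos ((π - τ) - u * Real.sin (π - τ)) := by
    rw [intervalIntegral.integral_comp_sub_left
      (fun τ => Real.cos (τ - u * Real.sin τ)) π]
    norm_num [sub_half]
  have hcomb : (∫ τ in (0:ℝ)..π, Real.cos (τ - u * Real.sin τ))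
      = ∫ τ in (0:ℝ)..(π/2), (Real.cos (τ - u * Real.sin τ)
          + Real.cos ((π - τ) - u * Real.sin (π - τ))) := by
    have h3 : IntervalIntegrable (fun τ : ℝ => Real.cos ((π - τ) - u * Real.sin (π - τ)))
        volume 0 (π/2) := (by continuity : Continuous fun τ : ℝ =>
        Real.cos ((π - τ) - u * Real.sin (π - τ))).intervalIntegrable _ _
    rw [← hsplit, hrefl, ← intervalIntegral.integral_add h1 h3]
  have hpt : ∀ τ : ℝ, Real.cos (τ - u * Real.sin τ)
      + Real.cos ((π - τ) - u * Real.sin (π - τ))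
      = 2 * (Real.sin τ * Real.sin (u * Real.sin τ)) := by
    intro τ
    rw [Real.sin_pi_sub, show (π - τ) - u * Real.sin τ = π - (τ + u * Real.sin τ) by ring,
      Real.cos_pi_sub, Real.cos_sub, Real.cos_add]
    ring
  have : (∫ τ in (0:ℝ)..π, Real.cos (τ - u * Real.sin τ))
      = 2 * ∫ τ in Set.Ioo (0:ℝ) (π/2), Real.sin τ * Real.sin (u * Real.sin τ) := by
    rw [hcomb]
    simp_rw [hpt]
    rw [intervalIntegral.integral_const_mul, intervalIntegral.integral_of_le (by linarith),
      ← integral_Ioc_eq_integral_Ioo]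
  rw [J1, this]
  ring

/-- `J₁(u) → 0` as `u → +∞`. -/
theorem J1_tendsto_zero : Tendsto J1 atTop (nhds 0) := by
  have h := RL_key.const_mul (2 / π)
  simp only [mul_zero] at h
  refine h.congr fun u => ?_
  rw [J1_eq u, change_of_var u]
end

section
/- For every y ∈ ℝ, the antiderivative identity ∫₀^y J₀(x)² dx = y·(J₀(y)² + J₁(y)²) + ∫₀^y J₁(x)² dx holds; equivalently, the function x ↦ x·(J₀(x)² + J₁(x)²) has derivative J₀(x)² − J₁(x)² at every x ∈ ℝ. -/
open MeasureTheory Real Filter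
open scoped RealInnerProductSpace

noncomputable def AA (u : ℝ) : ℝ := ∫ τ in (0:ℝ)..π, Real.cos (u * Real.sin τ)
noncomputable def BB (u : ℝ) : ℝ := ∫ τ in (0:ℝ)..π, Real.cos (τ - u * Real.sin τ)
noncomputable def CC (u : ℝ) : ℝ := ∫ τ in (0:ℝ)..π, -Real.sin (u * Real.sin τ) * Real.sin τ
noncomputable def DD (u : ℝ) : ℝ := ∫ τ in (0:ℝ)..π, Real.sin (τ - u * Real.sin τ) * Real.sin τ

lemma bnd (a b : ℝ) : |(-Real.sin a) * Real.sin b| ≤ 1 := by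
  rw [abs_mul]
  calc |(-Real.sin a)| * |Real.sin b| ≤ 1 * 1 :=
        mul_le_mul (by rw [abs_neg]; exact Real.abs_sin_le_one _)
          (Real.abs_sin_le_one _) (abs_nonneg _) one_pos.le
    _ = 1 := by ring

lemma hasDerivAt_AA (u : ℝ) : HasDerivAt AA (CC u) u := by
  have := intervalIntegral.hasDerivAt_integral_of_dominated_loc_of_deriv_le
    (F := fun x τ => Real.cos (x * Real.sin τ))
    (F' := fun x τ => -Real.sin (x * Real.sin τ) * Real.sin τ)
    (x₀ := u) (a := 0) (b := π) (μ := volume) (bound := fun _ => 1)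
    (Filter.univ_mem)
    (Filter.Eventually.of_forall fun x =>
      (Continuous.aestronglyMeasurable (by fun_prop)))
    ((by fun_prop : Continuous fun τ => Real.cos (u * Real.sin τ)).intervalIntegrable _ _)
    (Continuous.aestronglyMeasurable (by fun_prop))
    (Filter.Eventually.of_forall fun τ _ x _ => by
      simpa [Real.norm_eq_abs, abs_mul] using bnd (x * Real.sin τ) τ)
    (continuous_const.intervalIntegrable _ _)
    (Filter.Eventually.of_forall fun τ _ x _ => by
      simpa [Function.comp_def] using ((Real.hasDerivAt_cos (x * Real.sin τ)).comp x
        (hasDerivAt_mul_const (Real.sin τ))))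
  exact this.2

lemma hasDerivAt_BB (u : ℝ) : HasDerivAt BB (DD u) u := by
  have := intervalIntegral.hasDerivAt_integral_of_dominated_loc_of_deriv_le
    (F := fun x τ => Real.cos (τ - x * Real.sin τ))
    (F' := fun x τ => Real.sin (τ - x * Real.sin τ) * Real.sin τ)
    (x₀ := u) (a := 0) (b := π) (μ := volume) (bound := fun _ => 1)
    (Filter.univ_mem)
    (Filter.Eventually.of_forall fun x =>
      (Continuous.aestronglyMeasurable (by fun_prop)))
    ((by fun_prop : Continuous fun τ => Real.cos (τ - u * Real.sin τ)).intervalIntegrable _ _)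
    (Continuous.aestronglyMeasurable (by fun_prop))
    (Filter.Eventually.of_forall fun τ _ x _ => by
      have := bnd (-(τ - x * Real.sin τ)) τ
      rw [Real.sin_neg, neg_neg] at this
      simpa [Real.norm_eq_abs, abs_mul] using this)
    (continuous_const.intervalIntegrable _ _)
    (Filter.Eventually.of_forall fun τ _ x _ => by
      have h1 : HasDerivAt (fun x : ℝ => τ - x * Real.sin τ) (-Real.sin τ) x := by
        simpa using ((hasDerivAt_mul_const (Real.sin τ)).const_sub τ)
      have := (Real.hasDerivAt_cos (τ - x * Real.sin τ)).comp x h1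
      exact this.congr_deriv (by ring))
  exact this.2

lemma ident1 (u : ℝ) : u * CC u + u * BB u = 0 := by
  have h1 : IntervalIntegrable (fun τ => u * (-Real.sin (u * Real.sin τ) * Real.sin τ))
      volume 0 π := (by fun_prop : Continuous _).intervalIntegrable _ _
  have h2 : IntervalIntegrable (fun τ => u * Real.cos (τ - u * Real.sin τ))
      volume 0 π := (by fun_prop : Continuous _).intervalIntegrable _ _
  have key : (∫ τ in (0:ℝ)..π, (u * (-Real.sin (u * Real.sin τ) * Real.sin τ)
      + u * Real.cos (τ - u * Real.sin τ))) = 0 := by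
    have hptw : ∀ τ : ℝ, u * (-Real.sin (u * Real.sin τ) * Real.sin τ)
        + u * Real.cos (τ - u * Real.sin τ)
        = Real.cos (u * Real.sin τ) * (u * Real.cos τ) := by
      intro τ; rw [Real.cos_sub]; ring
    rw [intervalIntegral.integral_congr (fun τ _ => hptw τ)]
    rw [intervalIntegral.integral_eq_sub_of_hasDerivAt
      (f := fun τ => Real.sin (u * Real.sin τ))
      (fun τ _ => ((Real.hasDerivAt_sin (u * Real.sin τ)).comp τ
        ((Real.hasDerivAt_sin τ).const_mul u) :))
      ((by fun_prop : Continuous fun τ => Real.cos (u * Real.sin τ) * (u * Real.cos τ)).intervalIntegrable _ _)]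
    simp
  rw [intervalIntegral.integral_add h1 h2] at key
  rw [intervalIntegral.integral_const_mul, intervalIntegral.integral_const_mul] at key
  exact key

lemma ident2 (u : ℝ) : BB u + u * DD u - u * AA u = 0 := by
  have h1 : IntervalIntegrable (fun τ => Real.cos (τ - u * Real.sin τ))
      volume 0 π := (by fun_prop : Continuous _).intervalIntegrable _ _
  have h2 : IntervalIntegrable (fun τ => u * (Real.sin (τ - u * Real.sin τ) * Real.sin τ))
      volume 0 π := (by fun_prop : Continuous _).intervalIntegrable _ _
  have h3 : IntervalIntegrable (fun τ => u * Real.cos (u * Real.sin τ))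
      volume 0 π := (by fun_prop : Continuous _).intervalIntegrable _ _
  have key : (∫ τ in (0:ℝ)..π, (Real.cos (τ - u * Real.sin τ)
      + u * (Real.sin (τ - u * Real.sin τ) * Real.sin τ)
      - u * Real.cos (u * Real.sin τ))) = 0 := by
    have hptw : ∀ τ : ℝ, Real.cos (τ - u * Real.sin τ)
        + u * (Real.sin (τ - u * Real.sin τ) * Real.sin τ)
        - u * Real.cos (u * Real.sin τ)
        = Real.cos (τ - u * Real.sin τ) * (1 - u * Real.cos τ) := by
      intro τ
      rw [Real.cos_sub, Real.sin_sub]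
      linear_combination (u * Real.cos (u * Real.sin τ)) * (Real.sin_sq_add_cos_sq τ)
    rw [intervalIntegral.integral_congr (fun τ _ => hptw τ)]
    rw [intervalIntegral.integral_eq_sub_of_hasDerivAt
      (f := fun τ => Real.sin (τ - u * Real.sin τ))
      (fun τ _ => by
        have h1' : HasDerivAt (fun τ : ℝ => τ - u * Real.sin τ) (1 - u * Real.cos τ) τ :=
          (hasDerivAt_id τ).sub ((Real.hasDerivAt_sin τ).const_mul u)
        exact (Real.hasDerivAt_sin (τ - u * Real.sin τ)).comp τ h1')
      ((by fun_prop : Continuous fun τ => Real.cos (τ - u * Real.sin τ) * (1 - u * Real.cos τ)).intervalIntegrable _ _)]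
    simp
  rw [intervalIntegral.integral_sub (h1.add h2) h3, intervalIntegral.integral_add h1 h2,
    intervalIntegral.integral_const_mul, intervalIntegral.integral_const_mul] at key
  exact key

lemma hasDerivAt_J0 (u : ℝ) : HasDerivAt J0 ((1 / π) * CC u) u :=
  (hasDerivAt_AA u).const_mul (1 / π)

lemma hasDerivAt_J1 (u : ℝ) : HasDerivAt J1 ((1 / π) * DD u) u :=
  (hasDerivAt_BB u).const_mul (1 / π)

lemma main_deriv (x : ℝ) :
    HasDerivAt (fun x : ℝ => x * (J0 x ^ 2 + J1 x ^ 2)) (J0 x ^ 2 - J1 x ^ 2) x := by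
  have h := (hasDerivAt_id x).mul (((hasDerivAt_J0 x).pow 2).add ((hasDerivAt_J1 x).pow 2))
  refine h.congr_deriv ?_
  symm
  have e1 := ident1 x
  have e2 := ident2 x
  have hJ0 : J0 x = (1 / π) * AA x := rfl
  have hJ1 : J1 x = (1 / π) * BB x := rfl
  simp only [id, Pi.add_apply, Pi.pow_apply, Nat.add_one_sub_one, pow_one]
  rw [hJ0, hJ1]
  have hπ : (π : ℝ) ≠ 0 := Real.pi_ne_zero
  linear_combination (-2 * AA x / π ^ 2) * e1 + (-2 * BB x / π ^ 2) * e2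

/-- The antiderivative identity `∫₀^y J₀² = y (J₀(y)² + J₁(y)²) + ∫₀^y J₁²`; equivalently,
`x ↦ x (J₀(x)² + J₁(x)²)` has derivative `J₀(x)² − J₁(x)²` at every `x`. -/
theorem J0_sq_antiderivative :
    (∀ y : ℝ,
        ∫ x in (0:ℝ)..y, J0 x ^ 2 =
          y * (J0 y ^ 2 + J1 y ^ 2) + ∫ x in (0:ℝ)..y, J1 x ^ 2) ∧
      ∀ x : ℝ,
        HasDerivAt (fun x : ℝ => x * (J0 x ^ 2 + J1 x ^ 2)) (J0 x ^ 2 - J1 x ^ 2) x := by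
  constructor
  · intro y
    have cJ0 : Continuous J0 :=
      continuous_iff_continuousAt.2 fun x => (hasDerivAt_J0 x).continuousAt
    have cJ1 : Continuous J1 :=
      continuous_iff_continuousAt.2 fun x => (hasDerivAt_J1 x).continuousAt
    have i0 : IntervalIntegrable (fun x => J0 x ^ 2) volume 0 y :=
      (cJ0.pow 2).intervalIntegrable _ _
    have i1 : IntervalIntegrable (fun x => J1 x ^ 2) volume 0 y :=
      (cJ1.pow 2).intervalIntegrable _ _
    have key : (∫ x in (0:ℝ)..y, (J0 x ^ 2 - J1 x ^ 2)) = y * (J0 y ^ 2 + J1 y ^ 2) := by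
      rw [intervalIntegral.integral_eq_sub_of_hasDerivAt (fun t _ => main_deriv t)
        (((cJ0.pow 2).sub (cJ1.pow 2)).intervalIntegrable _ _)]
      simp
    rw [intervalIntegral.integral_sub i0 i1] at key
    linarith
  · exact main_deriv
end
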